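/- In the balls-and-bins process where m balls are thrown independently into n bins (not necessarily uniformly), the indicator random variables N_i = min{1, B_i} (indicating that bin i is non-empty) are negatively associated. -/

import Mathlib

open MeasureTheory

/-- A function `f` on vectors depends only on coordinates in the set `S`. -/
def DependsOnCoords {ι : Type*} (f : (ι → ℝ) → ℝ) (S : Set ι) : Prop :=
  ∀ x y : ι → ℝ, (∀ i ∈ S, x i = y i) → f x = f y

/-- Random variables `X i` are negatively associated: every two monotone increasing
functions defined on disjoint subsets of the variables are negatively correlated. -/
def NegAssoc {Ω ι : Type*} [MeasurableSpace Ω] (μ : Measure Ω) (X : ι → Ω → ℝ) : Prop :=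
  ∀ (S T : Set ι), Disjoint S T →
    ∀ f g : (ι → ℝ) → ℝ, Monotone f → Monotone g → DependsOnCoords f S → DependsOnCoords g T →
      ∫ ω, f (fun i => X i ω) * g (fun i => X i ω) ∂μ ≤
        (∫ ω, f (fun i => X i ω) ∂μ) * ∫ ω, g (fun i => X i ω) ∂μ

/-- Occupancy indicator vector: `occ z i = min 1 (#{b : z b = i})`. -/
noncomputable def occ {m n : ℕ} (z : Fin m → Fin n) : Fin n → ℝ :=
  fun i => min 1 ((Finset.univ.filter (fun b : Fin m => z b = i)).card : ℝ)

lemma occ_le_one {m n : ℕ} (z : Fin m → Fin n) (i : Fin n) : occ z i ≤ 1 :=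
  min_le_left _ _

lemma occ_cons {m n : ℕ} (j : Fin n) (z : Fin m → Fin n) :
    occ (Fin.cons (α := fun _ => Fin n) j z) = Function.update (occ z) j 1 := by
  funext i
  have hcard : ((Finset.univ.filter
      (fun b : Fin (m + 1) => Fin.cons (α := fun _ => Fin n) j z b = i)).card : ℝ) =
      (if j = i then (1 : ℝ) else 0) +
      ((Finset.univ.filter (fun b : Fin m => z b = i)).card : ℝ) := by
    rw [Finset.card_filter, Finset.card_filter]
    push_cast
    rw [Fin.sum_univ_succ]
    simp
  by_cases h : i = j
  · subst h
    rw [if_pos rfl] at hcard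
    simp only [Function.update_self, occ, hcard]
    have h0 : (0 : ℝ) ≤ ((Finset.univ.filter (fun b : Fin m => z b = i)).card : ℝ) := by
      positivity
    rw [min_eq_left (by linarith)]
  · rw [Function.update_of_ne h]
    simp only [occ, hcard, if_neg (Ne.symm h), zero_add]

lemma monotone_update_one {n : ℕ} (j : Fin n) :
    Monotone (fun x : Fin n → ℝ => Function.update x j 1) := by
  intro x y hxy i
  show Function.update x j 1 i ≤ Function.update y j 1 i
  by_cases h : i = j
  · subst h; simp
  · rw [Function.update_of_ne h, Function.update_of_ne h]; exact hxy i

lemma le_update_one {n : ℕ} (j : Fin n) (x : Fin n → ℝ) (hx : x j ≤ 1) :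
    x ≤ Function.update x j 1 := by
  intro i
  by_cases h : i = j
  · subst h; simpa using hx
  · rw [Function.update_of_ne h]

/-- Chebyshev-type step: if each `A j ≥ A0`, `B j ≥ B0`, and for each `j` at least one of
them is attained, then the weighted average of products is at most the product of averages. -/
lemma cheb_step {ι : Type*} [Fintype ι] (p A B : ι → ℝ) (A0 B0 : ℝ)
    (hp : ∀ j, 0 ≤ p j) (hs : ∑ j, p j = 1)
    (hA : ∀ j, A0 ≤ A j) (hB : ∀ j, B0 ≤ B j)
    (hAB : ∀ j, (A j - A0) * (B j - B0) = 0) :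
    ∑ j, p j * (A j * B j) ≤ (∑ j, p j * A j) * (∑ j, p j * B j) := by
  set α := ∑ j, p j * A j with hα
  set β := ∑ j, p j * B j with hβ
  have h1 : A0 ≤ α := by
    calc A0 = ∑ j, p j * A0 := by rw [← Finset.sum_mul, hs, one_mul]
    _ ≤ α := Finset.sum_le_sum fun j _ => mul_le_mul_of_nonneg_left (hA j) (hp j)
  have h2 : B0 ≤ β := by
    calc B0 = ∑ j, p j * B0 := by rw [← Finset.sum_mul, hs, one_mul]
    _ ≤ β := Finset.sum_le_sum fun j _ => mul_le_mul_of_nonneg_left (hB j) (hp j)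
  have hL : ∑ j, p j * (A j * B j)
      = A0 * β + B0 * α - A0 * B0 := by
    have : ∀ j ∈ Finset.univ, p j * (A j * B j)
        = A0 * (p j * B j) + B0 * (p j * A j) - A0 * B0 * p j := by
      intro j _
      linear_combination (p j) * (hAB j)
    rw [Finset.sum_congr rfl this]
    rw [Finset.sum_sub_distrib, Finset.sum_add_distrib, ← Finset.mul_sum, ← Finset.mul_sum,
      ← Finset.mul_sum, hs, mul_one, ← hα, ← hβ]
  rw [hL]
  nlinarith [mul_nonneg (sub_nonneg.mpr h1) (sub_nonneg.mpr h2)]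

/-- The key finite inequality, proved by induction on the number of balls. -/
lemma key_ineq {n : ℕ} (S T : Set (Fin n)) (hST : Disjoint S T) :
    ∀ (m : ℕ) (p : Fin m → Fin n → ℝ), (∀ b j, 0 ≤ p b j) → (∀ b, ∑ j, p b j = 1) →
    ∀ f g : (Fin n → ℝ) → ℝ, Monotone f → Monotone g → DependsOnCoords f S → DependsOnCoords g T →
    ∑ z : Fin m → Fin n, (∏ b, p b (z b)) * (f (occ z) * g (occ z)) ≤
      (∑ z : Fin m → Fin n, (∏ b, p b (z b)) * f (occ z)) *
      (∑ z : Fin m → Fin n, (∏ b, p b (z b)) * g (occ z)) := by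
  intro m
  induction m with
  | zero =>
    intro p hp hp1 f g hf hg hfS hgT
    rw [Fintype.sum_unique, Fintype.sum_unique, Fintype.sum_unique]
    simp only [Finset.univ_eq_empty, Finset.prod_empty, one_mul]
    exact le_of_eq rfl
  | succ m IH =>
    intro p hp hp1 f g hf hg hfS hgT
    -- sum decomposition
    have hsum : ∀ F : (Fin (m + 1) → Fin n) → ℝ,
        ∑ z : Fin (m + 1) → Fin n, F z
        = ∑ j : Fin n, ∑ z : Fin m → Fin n, F (Fin.cons j z) := by
      intro F
      rw [← Equiv.sum_comp (Fin.consEquiv (fun _ => Fin n)) F, Fintype.sum_prod_type]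
      rfl
    have hprod : ∀ (j : Fin n) (z : Fin m → Fin n),
        ∏ b : Fin (m + 1), p b (Fin.cons (α := fun _ => Fin n) j z b)
        = p 0 j * ∏ b : Fin m, p b.succ (z b) := by
      intro j z
      rw [Fin.prod_univ_succ]
      simp
    set p' : Fin m → Fin n → ℝ := fun b => p b.succ with hp'def
    have hp'0 : ∀ b j, 0 ≤ p' b j := fun b j => hp _ _
    have hp'1 : ∀ b, ∑ j, p' b j = 1 := fun b => hp1 _
    have hπ : ∀ z : Fin m → Fin n, 0 ≤ ∏ b, p' b (z b) :=
      fun z => Finset.prod_nonneg fun b _ => hp'0 b _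
    set fj : Fin n → (Fin n → ℝ) → ℝ := fun j x => f (Function.update x j 1) with hfj
    set gj : Fin n → (Fin n → ℝ) → ℝ := fun j x => g (Function.update x j 1) with hgj
    have hfjm : ∀ j, Monotone (fj j) := fun j => hf.comp (monotone_update_one j)
    have hgjm : ∀ j, Monotone (gj j) := fun j => hg.comp (monotone_update_one j)
    have hfjS : ∀ j, DependsOnCoords (fj j) S := by
      intro j x y hxy
      apply hfS
      intro i hi
      by_cases h : i = j
      · subst h; simp
      · rw [Function.update_of_ne h, Function.update_of_ne h]; exact hxy i hi
    have hgjT : ∀ j, DependsOnCoords (gj j) T := by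
      intro j x y hxy
      apply hgT
      intro i hi
      by_cases h : i = j
      · subst h; simp
      · rw [Function.update_of_ne h, Function.update_of_ne h]; exact hxy i hi
    set A : Fin n → ℝ := fun j => ∑ z : Fin m → Fin n, (∏ b, p' b (z b)) * fj j (occ z) with hA
    set B : Fin n → ℝ := fun j => ∑ z : Fin m → Fin n, (∏ b, p' b (z b)) * gj j (occ z) with hB
    set A0 : ℝ := ∑ z : Fin m → Fin n, (∏ b, p' b (z b)) * f (occ z) with hA0
    set B0 : ℝ := ∑ z : Fin m → Fin n, (∏ b, p' b (z b)) * g (occ z) with hB0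
    have hfle : ∀ (j : Fin n) (z : Fin m → Fin n), f (occ z) ≤ fj j (occ z) := fun j z =>
      hf (le_update_one j (occ z) (occ_le_one z j))
    have hgle : ∀ (j : Fin n) (z : Fin m → Fin n), g (occ z) ≤ gj j (occ z) := fun j z =>
      hg (le_update_one j (occ z) (occ_le_one z j))
    have hAle : ∀ j, A0 ≤ A j := fun j =>
      Finset.sum_le_sum fun z _ => mul_le_mul_of_nonneg_left (hfle j z) (hπ z)
    have hBle : ∀ j, B0 ≤ B j := fun j =>
      Finset.sum_le_sum fun z _ => mul_le_mul_of_nonneg_left (hgle j z) (hπ z)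
    have hAeq : ∀ j, j ∉ S → A j = A0 := by
      intro j hj
      apply Finset.sum_congr rfl
      intro z _
      congr 1
      apply hfS
      intro i hi
      have : i ≠ j := fun h => hj (h ▸ hi)
      rw [Function.update_of_ne this]
    have hBeq : ∀ j, j ∉ T → B j = B0 := by
      intro j hj
      apply Finset.sum_congr rfl
      intro z _
      congr 1
      apply hgT
      intro i hi
      have : i ≠ j := fun h => hj (h ▸ hi)
      rw [Function.update_of_ne this]
    have hAB : ∀ j, (A j - A0) * (B j - B0) = 0 := by
      intro j
      by_cases h : j ∈ S
      · have : j ∉ T := Set.disjoint_left.mp hST h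
        rw [hBeq j this, sub_self, mul_zero]
      · rw [hAeq j h, sub_self, zero_mul]
    -- rewrite all three sums
    rw [hsum, hsum, hsum]
    have hrw : ∀ (F : (Fin n → ℝ) → ℝ) (j : Fin n) (z : Fin m → Fin n),
        (∏ b : Fin (m + 1), p b (Fin.cons (α := fun _ => Fin n) j z b))
          * F (occ (Fin.cons (α := fun _ => Fin n) j z))
        = p 0 j * ((∏ b, p' b (z b)) * F (Function.update (occ z) j 1)) := by
      intro F j z
      rw [hprod, occ_cons, mul_assoc]
    calc ∑ j : Fin n, ∑ z : Fin m → Fin n,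
          (∏ b : Fin (m + 1), p b (Fin.cons (α := fun _ => Fin n) j z b))
          * (f (occ (Fin.cons (α := fun _ => Fin n) j z))
            * g (occ (Fin.cons (α := fun _ => Fin n) j z)))
        = ∑ j : Fin n, p 0 j * ∑ z : Fin m → Fin n,
          (∏ b, p' b (z b)) * (fj j (occ z) * gj j (occ z)) := by
          apply Finset.sum_congr rfl
          intro j _
          rw [Finset.mul_sum]
          apply Finset.sum_congr rfl
          intro z _
          rw [hprod, occ_cons, mul_assoc]
      _ ≤ ∑ j : Fin n, p 0 j * (A j * B j) := by
          apply Finset.sum_le_sum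
          intro j _
          exact mul_le_mul_of_nonneg_left
            (IH p' hp'0 hp'1 (fj j) (gj j) (hfjm j) (hgjm j) (hfjS j) (hgjT j)) (hp 0 j)
      _ ≤ (∑ j : Fin n, p 0 j * A j) * (∑ j : Fin n, p 0 j * B j) :=
          cheb_step (p 0) A B A0 B0 (hp 0) (hp1 0) hAle hBle hAB
      _ = _ := by
          congr 1
          · apply Finset.sum_congr rfl
            intro j _
            rw [hA, Finset.mul_sum]
            apply Finset.sum_congr rfl
            intro z _
            rw [hrw f j z]
          · apply Finset.sum_congr rfl
            intro j _
            rw [hB, Finset.mul_sum]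
            apply Finset.sum_congr rfl
            intro z _
            rw [hrw g j z]

/-- in the balls-and-bins process where `m` balls are thrown independently
into `n` bins, the indicators `N i = min 1 (B i)` of the bins being non-empty are
negatively associated. -/
theorem nonempty_bins_NA
    {Ω : Type*} [MeasurableSpace Ω] (μ : Measure Ω) [IsProbabilityMeasure μ]
    (m n : ℕ) (Z : Fin m → Ω → Fin n)
    (hmeas : ∀ b, Measurable (Z b))
    (hind : ProbabilityTheory.iIndepFun Z μ) :
    NegAssoc μ (fun (i : Fin n) (ω : Ω) =>
      min 1 ((Finset.univ.filter (fun b : Fin m => Z b ω = i)).card : ℝ)) := by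
  intro S T hST f g hf hg hfS hgT
  set W : Ω → (Fin m → Fin n) := fun ω b => Z b ω with hW
  have hWmeas : Measurable W := measurable_pi_iff.mpr hmeas
  set p : Fin m → Fin n → ℝ := fun b j => (μ (Z b ⁻¹' {j})).toReal with hp
  have hfiber : ∀ z : Fin m → Fin n,
      (Measure.map W μ) {z} = ∏ b, μ (Z b ⁻¹' {z b}) := by
    intro z
    rw [Measure.map_apply hWmeas (measurableSet_singleton z)]
    have : W ⁻¹' {z} = ⋂ b ∈ Finset.univ, Z b ⁻¹' {z b} := by
      ext ω
      simp [hW, funext_iff]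
    rw [this, hind.measure_inter_preimage_eq_mul Finset.univ
      (fun i _ => measurableSet_singleton (z i))]
  have hint : ∀ H : (Fin m → Fin n) → ℝ,
      ∫ ω, H (W ω) ∂μ = ∑ z : Fin m → Fin n, (∏ b, p b (z b)) * H z := by
    intro H
    have : IsProbabilityMeasure (Measure.map W μ) :=
      Measure.isProbabilityMeasure_map hWmeas.aemeasurable
    rw [← integral_map hWmeas.aemeasurable
      (measurable_of_countable H).aestronglyMeasurable,
      integral_fintype (Integrable.of_finite)]
    apply Finset.sum_congr rfl
    intro z _
    rw [Measure.real, hfiber z, smul_eq_mul, ENNReal.toReal_prod]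
  have hp0 : ∀ b j, 0 ≤ p b j := fun b j => ENNReal.toReal_nonneg
  have hp1 : ∀ b, ∑ j, p b j = 1 := by
    intro b
    have h1 : ∑ j : Fin n, μ (Z b ⁻¹' {j}) = 1 := by
      rw [sum_measure_preimage_singleton Finset.univ
        (fun j _ => hmeas b (measurableSet_singleton j))]
      simp
    have := congrArg ENNReal.toReal h1
    rwa [ENNReal.toReal_sum (fun j _ => measure_ne_top μ _), ENNReal.toReal_one] at this
  have hocc : ∀ ω, (fun i => min 1
      ((Finset.univ.filter (fun b : Fin m => Z b ω = i)).card : ℝ)) = occ (W ω) := by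
    intro ω
    rfl
  calc ∫ ω, f (fun i => min 1 ((Finset.univ.filter (fun b : Fin m => Z b ω = i)).card : ℝ))
        * g (fun i => min 1 ((Finset.univ.filter (fun b : Fin m => Z b ω = i)).card : ℝ)) ∂μ
      = ∑ z : Fin m → Fin n, (∏ b, p b (z b)) * (f (occ z) * g (occ z)) :=
        hint (fun z => f (occ z) * g (occ z))
    _ ≤ (∑ z : Fin m → Fin n, (∏ b, p b (z b)) * f (occ z)) *
        (∑ z : Fin m → Fin n, (∏ b, p b (z b)) * g (occ z)) :=
        key_ineq S T hST m p hp0 hp1 f g hf hg hfS hgT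
    _ = (∫ ω, f (fun i => min 1 ((Finset.univ.filter
          (fun b : Fin m => Z b ω = i)).card : ℝ)) ∂μ) *
        ∫ ω, g (fun i => min 1 ((Finset.univ.filter
          (fun b : Fin m => Z b ω = i)).card : ℝ)) ∂μ := by
        have h1 := hint (fun z => f (occ z))
        have h2 := hint (fun z => g (occ z))
        exact congrArg₂ (· * ·) h1.symm h2.symm
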